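/- Fix N ≥ 1 and γ > 0. Suppose r_0, r_1, …, r_N satisfy r_i = 1 + ln(r_{i-1}) for 1 ≤ i ≤ N, and ∏_{n=0}^{N} r_n = 2γ + 1. Define q_{-1} = 0 and q_n = (∏_{i=0}^{n} r_i)/γ − 1/γ for 0 ≤ n ≤ N, and assume r_i > 1 for all i. Then q_N = 2, the sequence (q_n) is strictly increasing, and for every 0 ≤ n ≤ N−1 the levels satisfy (q_n + γ⁻¹) ln((q_n + γ⁻¹)/(q_{n-1} + γ⁻¹)) = q_{n+1} − q_n. -/

import Mathlib

theorem uniform_quantizer_structure (N : ℕ) (hN : 1 ≤ N) (γ : ℝ) (hγ : 0 < γ)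
    (r : ℕ → ℝ)
    (hrec : ∀ i : ℕ, 1 ≤ i → i ≤ N → r i = 1 + Real.log (r (i - 1)))
    (hprod : ∏ n ∈ Finset.range (N + 1), r n = 2 * γ + 1)
    (hr : ∀ i : ℕ, i ≤ N → 1 < r i)
    (q : ℤ → ℝ) (hqm1 : q (-1) = 0)
    (hq : ∀ n : ℤ, 0 ≤ n → n ≤ (N : ℤ) →
      q n = (∏ i ∈ Finset.range (n.toNat + 1), r i) / γ - 1 / γ) :
    q (N : ℤ) = 2 ∧
    (∀ n : ℤ, -1 ≤ n → n < (N : ℤ) → q n < q (n + 1)) ∧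
    (∀ n : ℤ, 0 ≤ n → n ≤ (N : ℤ) - 1 →
      (q n + γ⁻¹) * Real.log ((q n + γ⁻¹) / (q (n - 1) + γ⁻¹)) =
        q (n + 1) - q n) := by
  have hrpos : ∀ i, i ≤ N → (0:ℝ) < r i := fun i hi => lt_trans one_pos (hr i hi)
  have hP : ∀ m, m ≤ N → 0 < ∏ i ∈ Finset.range (m+1), r i := by
    intro m hm
    apply Finset.prod_pos
    intro i hi
    exact hrpos i (le_trans (Nat.lt_succ_iff.mp (Finset.mem_range.mp hi)) hm)
  refine ⟨?_, ?_, ?_⟩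
  · have h := hq (N:ℤ) (Int.natCast_nonneg N) le_rfl
    rw [Int.toNat_natCast, hprod] at h
    rw [h]
    field_simp
    ring
  · intro n hn1 hn2
    rcases eq_or_lt_of_le hn1 with h | h
    · have hn : n = -1 := h.symm
      subst hn
      have h0 := hq 0 le_rfl (by exact_mod_cast Int.natCast_nonneg N)
      simp only [Int.toNat_zero, zero_add, Finset.prod_range_one] at h0
      norm_num [hqm1, h0]
      have hpos : 0 < (r 0 - 1) / γ := div_pos (by linarith [hr 0 (Nat.zero_le N)]) hγ
      rw [sub_div, one_div] at hpos
      linarith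
    · have hn0 : 0 ≤ n := by omega
      set m := n.toNat with hm
      have hnm : n = (m : ℤ) := (Int.toNat_of_nonneg hn0).symm
      have hmN : m < N := by omega
      have h1 := hq n hn0 (by omega)
      have h2 := hq (n+1) (by omega) (by omega)
      have ht : (n+1).toNat = m + 1 := by omega
      rw [ht] at h2
      rw [h1, h2, Finset.prod_range_succ]
      have hPm := hP m (by omega)
      have hrm := hr (m+1) (by omega)
      have : (∏ i ∈ Finset.range (m + 1), r i) < (∏ i ∈ Finset.range (m + 1), r i) * r (m+1) := by
        nlinarith
      gcongr ?_ / γ - 1/γ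
      calc (∏ x ∈ Finset.range m, r x) * r m
          = ∏ i ∈ Finset.range (m+1), r i := (Finset.prod_range_succ r m).symm
        _ < (∏ i ∈ Finset.range (m+1), r i) * r (m+1) := by nlinarith
        _ = ∏ i ∈ Finset.range (m+1+1), r i := (Finset.prod_range_succ r (m+1)).symm
  · intro n hn0 hnN
    set m := n.toNat with hm
    have hnm : n = (m : ℤ) := (Int.toNat_of_nonneg hn0).symm
    have hmN : m + 1 ≤ N := by omega
    have h1 := hq n hn0 (by omega)
    have h2 := hq (n+1) (by omega) (by omega)
    have ht : (n+1).toNat = m + 1 := by omega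
    rw [ht] at h2
    have hPm := hP m (by omega)
    -- q n + γ⁻¹ = P m / γ
    have hq1 : q n + γ⁻¹ = (∏ i ∈ Finset.range (m+1), r i) / γ := by
      rw [h1, ← hm]; field_simp; ring
    -- D := q (n-1) + γ⁻¹ is positive and P m / γ = D * r m
    have hD : 0 < q (n-1) + γ⁻¹ ∧
        q n + γ⁻¹ = (q (n-1) + γ⁻¹) * r m := by
      rcases Nat.eq_zero_or_pos m with hm0 | hm0
      · have hn1 : n - 1 = -1 := by omega
        rw [hn1, hqm1, zero_add]
        constructor
        · exact inv_pos.mpr hγ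
        · rw [hq1, hm0]
          simp [Finset.prod_range_one]
          rw [div_eq_mul_inv, mul_comm]
      · have h3 := hq (n-1) (by omega) (by omega)
        have ht3 : (n-1).toNat = m - 1 := by omega
        rw [ht3] at h3
        have hPm1 := hP (m-1) (by omega)
        have hstep : (∏ i ∈ Finset.range (m-1+1), r i) * r m = ∏ i ∈ Finset.range (m+1), r i := by
          have hme : m - 1 + 1 = m := by omega
          rw [hme, Finset.prod_range_succ]
        constructor
        · rw [h3]
          have : 0 < (∏ i ∈ Finset.range (m-1+1), r i) / γ := div_pos hPm1 hγ
          calc (0:ℝ) < (∏ i ∈ Finset.range (m-1+1), r i) / γ := this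
            _ = (∏ i ∈ Finset.range (m-1+1), r i) / γ - 1/γ + γ⁻¹ := by field_simp; ring
        · rw [h3, hq1]
          field_simp
          linarith [hstep]
    obtain ⟨hDpos, hDeq⟩ := hD
    have hrat : (q n + γ⁻¹) / (q (n-1) + γ⁻¹) = r m := by
      rw [hDeq, mul_comm, mul_div_assoc, div_self hDpos.ne', mul_one]
    have hlog : Real.log (r m) = r (m+1) - 1 := by
      have := hrec (m+1) (by omega) hmN
      simp only [Nat.add_sub_cancel] at this
      linarith
    rw [Finset.prod_range_succ] at h2
    set P := ∏ i ∈ Finset.range (m+1), r i with hPdef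
    rw [hrat, hlog, hq1, h1, h2]
    field_simp
    ring
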